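/- Let n > n_ex ≥ 2 be integers, s ≥ 2, 1/s < p_ex ≤ 1, r = (s/(s-1))·(p_ex - 1/s)^2 + 1/s, δ = (p_ex - 1/s)^2 / n^2, and ρ = (C(n,2) - C(n_ex,2))·(1/s) + C(n_ex,2)·r. Then ρ/C(n,2) - 1/s > 2δ. -/
import Mathlib


/-- Separation of the average agreement probability ρ/C(n,2) above 1/s. -/
theorem stmt5 (n nex s : ℕ) (h1 : 2 ≤ nex) (h2 : nex < n) (hs : 2 ≤ s)
    (pex : ℝ) (hp : 1 / (s : ℝ) < pex) (hp1 : pex ≤ 1)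
    (r δ ρ : ℝ)
    (hr : r = ((s : ℝ) / ((s : ℝ) - 1)) * (pex - 1 / s) ^ 2 + 1 / s)
    (hδ : δ = (pex - 1 / s) ^ 2 / (n : ℝ) ^ 2)
    (hρ : ρ = ((n.choose 2 : ℝ) - (nex.choose 2 : ℝ)) * (1 / s) + (nex.choose 2 : ℝ) * r) :
    ρ / (n.choose 2 : ℝ) - 1 / s > 2 * δ := by
  have hsR : (2:ℝ) ≤ s := by exact_mod_cast hs
  have hq : 0 < pex - 1/s := by linarith
  have hn3 : 3 ≤ n := by omega
  have hnR : (3:ℝ) ≤ n := by exact_mod_cast hn3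
  have hCn : (n.choose 2 : ℝ) = n * (n - 1) / 2 := by
    rw [Nat.cast_choose_two]
  have hCex : (1:ℝ) ≤ (nex.choose 2 : ℝ) := by
    have : 1 ≤ nex.choose 2 := Nat.choose_pos (by omega)
    exact_mod_cast this
  have hC0 : (0:ℝ) < (n.choose 2 : ℝ) := by rw [hCn]; nlinarith
  have hs0 : (s:ℝ) ≠ 0 := by linarith
  have hs1 : (0:ℝ) < (s:ℝ) - 1 := by linarith
  have hN0 : (0:ℝ) < (n:ℝ) := by linarith
  subst hr hδ hρ
  rw [gt_iff_lt, ← sub_pos]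
  have heq : ((n.choose 2 : ℝ) - (nex.choose 2 : ℝ)) * (1 / s)
        + (nex.choose 2 : ℝ) * (((s : ℝ) / ((s : ℝ) - 1)) * (pex - 1 / s) ^ 2 + 1 / s) =
      (n.choose 2 : ℝ) * (1 / s)
        + (nex.choose 2 : ℝ) * (((s : ℝ) / ((s : ℝ) - 1)) * (pex - 1 / s) ^ 2) := by ring
  rw [heq]
  have key : ((n.choose 2 : ℝ) * (1 / s)
        + (nex.choose 2 : ℝ) * (((s : ℝ) / ((s : ℝ) - 1)) * (pex - 1 / s) ^ 2)) / (n.choose 2 : ℝ)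
      - 1 / s - 2 * ((pex - 1 / s) ^ 2 / (n : ℝ) ^ 2)
      = (pex - 1/s)^2 * ((nex.choose 2 : ℝ) * s * (n:ℝ)^2 - 2 * ((s:ℝ) - 1) * (n.choose 2 : ℝ))
        / (((s:ℝ) - 1) * (n.choose 2 : ℝ) * (n:ℝ)^2) := by
    field_simp
    ring
  rw [key]
  apply div_pos
  · apply mul_pos (by positivity)
    rw [hCn]
    nlinarith [mul_pos hs1 hN0, mul_le_mul_of_nonneg_right hCex (by positivity : (0:ℝ) ≤ (s:ℝ)*(n:ℝ)^2), sq_nonneg (n:ℝ)]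
  · positivity
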